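/- Let d ≥ 1, let p ≥ 1 be real, let R > 0, x₀ ∈ ℝ^d, and let s, ŝ : ℝ^d → ℝ^d be continuous vector fields. Suppose there exist δ > 0 and 0 < m ≤ M such that for every y ∈ ∂B_R(x₀): (a) ‖s(y) − ŝ(y)‖ < δ; (b) m < ‖s(y)‖ ≤ M and m < ‖ŝ(y)‖ ≤ M; (c) ‖t·s(y) + (1−t)·ŝ(y)‖ ≥ m for every t ∈ [0,1]. Then |Δ̄_p s(x₀) − Δ̄_p ŝ(x₀)| ≤ (σ(∂B_R(x₀)) / vol(B_R(x₀))) · C_p. -/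

import Mathlib

open MeasureTheory Metric
open scoped InnerProductSpace

/-- Boundary-formulation average p-Laplace of a vector field `s` at `x₀` with radius `R`:
`(1 / vol(B_R x₀)) ∫_{∂B_R x₀} ‖s y‖^(p-2) ⟪s y, (y - x₀)/R⟫ dσ(y)`,
where `σ` is the `(d-1)`-dimensional Hausdorff measure. -/
noncomputable def avgPLaplace (d : ℕ) (p : ℝ)
    (s : EuclideanSpace ℝ (Fin d) → EuclideanSpace ℝ (Fin d))
    (x₀ : EuclideanSpace ℝ (Fin d)) (R : ℝ) : ℝ :=
  (volume (ball x₀ R)).toReal⁻¹ *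
    ∫ y in sphere x₀ R, ‖s y‖ ^ (p - 2) * ⟪s y, R⁻¹ • (y - x₀)⟫_ℝ ∂(μH[(d : ℝ) - 1])

section AuxLemmas

open scoped ENNReal NNReal

variable {E : Type*} [NormedAddCommGroup E] [InnerProductSpace ℝ E]

/-- derivative of `v ↦ ‖v‖^(p-2) ⟪v,n⟫`. -/
private lemma hasFDerivAt_philap (n x : E) (hx : x ≠ 0) (p : ℝ) :
    HasFDerivAt (fun v : E => ‖v‖ ^ (p - 2) * ⟪v, n⟫_ℝ)
      (((‖x‖ ^ 2 : ℝ) ^ ((p-2)/2)) • (innerSL ℝ n) +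
        (⟪x, n⟫_ℝ) • ((((p-2)/2) * (‖x‖ ^ 2 : ℝ) ^ ((p-2)/2 - 1)) • (2 • innerSL ℝ x))) x := by
  have hq : HasFDerivAt (fun v : E => (‖v‖ ^ 2 : ℝ)) (2 • innerSL ℝ x) x :=
    (hasStrictFDerivAt_norm_sq x).hasFDerivAt
  have hpos : (0:ℝ) < ‖x‖ ^ 2 := pow_pos (norm_pos_iff.2 hx) 2
  have hh : HasDerivAt (fun r : ℝ => r ^ ((p-2)/2))
      (((p-2)/2) * (‖x‖ ^ 2 : ℝ) ^ ((p-2)/2 - 1)) (‖x‖ ^ 2) :=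
    Real.hasDerivAt_rpow_const (Or.inl hpos.ne')
  have hA : HasFDerivAt (fun v : E => ((‖v‖ ^ 2 : ℝ) ^ ((p-2)/2)))
      ((((p-2)/2) * (‖x‖ ^ 2 : ℝ) ^ ((p-2)/2 - 1)) • (2 • innerSL ℝ x)) x := by
    have := hh.comp_hasFDerivAt x hq; exact this
  have hB : HasFDerivAt (fun v : E => ⟪v, n⟫_ℝ) (innerSL ℝ n) x := by
    have : (fun v : E => ⟪v, n⟫_ℝ) = fun v => innerSL ℝ n v := by
      funext v; simp [real_inner_comm]
    rw [this]
    exact (innerSL ℝ n).hasFDerivAt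
  have := hA.mul hB
  have he : (fun v : E => ‖v‖ ^ (p - 2) * ⟪v, n⟫_ℝ)
      = fun v : E => ((‖v‖ ^ 2 : ℝ) ^ ((p-2)/2)) * ⟪v, n⟫_ℝ := by
    funext v
    rw [← Real.rpow_natCast ‖v‖ 2, ← Real.rpow_mul (norm_nonneg v),
      show ((2:ℕ):ℝ) * ((p-2)/2) = p - 2 by push_cast; ring]
  rw [he]
  exact this

/-- rpow algebra: rewrite powers of `‖x‖^2` in terms of `‖x‖`. -/
private lemma sq_rpow_eq (r : ℝ) (hr : 0 < r) (q : ℝ) :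
    ((r ^ 2 : ℝ)) ^ q = r ^ (2 * q) := by
  rw [← Real.rpow_natCast r 2, ← Real.rpow_mul hr.le]
  norm_num

/-- Pointwise bound via the mean value inequality. -/
private lemma pointwise_bound (p : ℝ) (hp : 1 ≤ p) (n v w : E) (hn : ‖n‖ ≤ 1)
    (m M δ : ℝ) (hm : 0 < m) (hδ : 0 ≤ δ)
    (hvM : ‖v‖ ≤ M) (hwM : ‖w‖ ≤ M)
    (hseg : ∀ t ∈ Set.Icc (0:ℝ) 1, m ≤ ‖t • v + (1 - t) • w‖)
    (hdist : ‖v - w‖ ≤ δ) :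
    |‖v‖ ^ (p - 2) * ⟪v, n⟫_ℝ - ‖w‖ ^ (p - 2) * ⟪w, n⟫_ℝ| ≤
      (if 2 ≤ p then δ * M ^ (p - 2) * (p - 1) else δ * m ^ (p - 2) * (3 - p)) := by
  set C₀ : ℝ := if 2 ≤ p then M ^ (p - 2) * (p - 1) else m ^ (p - 2) * (3 - p) with hC₀
  have hMpos : 0 < M := lt_of_lt_of_le hm (by
    have := hseg 1 ⟨zero_le_one, le_refl 1⟩
    simp only [one_smul, sub_self, zero_smul, add_zero] at this
    exact this.trans hvM)
  have hC₀nonneg : 0 ≤ C₀ := by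
    rw [hC₀]; split_ifs with h
    · exact mul_nonneg (Real.rpow_nonneg hMpos.le _) (by linarith)
    · exact mul_nonneg (Real.rpow_nonneg hm.le _) (by push_neg at h; linarith)
  -- membership facts for the segment
  have hmem : ∀ x ∈ segment ℝ w v, m ≤ ‖x‖ ∧ ‖x‖ ≤ M := by
    rintro x ⟨a, b, ha, hb, hab, rfl⟩
    constructor
    · have := hseg b ⟨hb, by linarith⟩
      have h1 : (1 - b) = a := by linarith
      rw [h1] at this
      simpa [add_comm] using this
    · calc ‖a • w + b • v‖ ≤ ‖a • w‖ + ‖b • v‖ := norm_add_le _ _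
        _ = a * ‖w‖ + b * ‖v‖ := by
            rw [norm_smul, norm_smul, Real.norm_eq_abs, Real.norm_eq_abs,
              abs_of_nonneg ha, abs_of_nonneg hb]
        _ ≤ a * M + b * M := by
            gcongr
        _ = M := by rw [← add_mul, hab, one_mul]
  -- the derivative bound on the segment
  set f' : E → (E →L[ℝ] ℝ) := fun x =>
    (((‖x‖ ^ 2 : ℝ) ^ ((p-2)/2)) • (innerSL ℝ n) +
      (⟪x, n⟫_ℝ) • ((((p-2)/2) * (‖x‖ ^ 2 : ℝ) ^ ((p-2)/2 - 1)) • (2 • innerSL ℝ x)))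
  have key : ‖(fun u : E => ‖u‖ ^ (p - 2) * ⟪u, n⟫_ℝ) v -
      (fun u : E => ‖u‖ ^ (p - 2) * ⟪u, n⟫_ℝ) w‖ ≤ C₀ * ‖v - w‖ := by
    apply Convex.norm_image_sub_le_of_norm_hasFDerivWithin_le
      (f' := f') ?_ ?_ (convex_segment w v)
      (left_mem_segment ℝ w v) (right_mem_segment ℝ w v)
    · intro x hx
      have hx0 : x ≠ 0 := by
        intro h
        have := (hmem x hx).1
        rw [h, norm_zero] at this; linarith
      exact (hasFDerivAt_philap n x hx0 p).hasFDerivWithinAt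
    · intro x hx
      obtain ⟨hxm, hxM⟩ := hmem x hx
      have hx0 : (0:ℝ) < ‖x‖ := lt_of_lt_of_le hm hxm
      apply ContinuousLinearMap.opNorm_le_bound _ hC₀nonneg
      intro u
      have happ : f' x u = ((‖x‖ ^ 2 : ℝ) ^ ((p-2)/2)) * ⟪n, u⟫_ℝ +
          ⟪x, n⟫_ℝ * ((((p-2)/2) * (‖x‖ ^ 2 : ℝ) ^ ((p-2)/2 - 1)) * (2 * ⟪x, u⟫_ℝ)) := by
        simp [f', ContinuousLinearMap.add_apply, ContinuousLinearMap.smul_apply,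
          innerSL_apply_apply, two_smul, smul_eq_mul]
        ring
      rw [happ]
      have e1 : ((‖x‖ ^ 2 : ℝ)) ^ ((p-2)/2) = ‖x‖ ^ (p - 2) := by
        rw [sq_rpow_eq _ hx0]; ring_nf
      have e2 : ((‖x‖ ^ 2 : ℝ)) ^ ((p-2)/2 - 1) = ‖x‖ ^ (p - 4) := by
        rw [sq_rpow_eq _ hx0]; ring_nf
      rw [e1, e2]
      have cs1 : |⟪n, u⟫_ℝ| ≤ ‖u‖ := by
        calc |⟪n, u⟫_ℝ| ≤ ‖n‖ * ‖u‖ := abs_real_inner_le_norm n u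
          _ ≤ 1 * ‖u‖ := by gcongr
          _ = ‖u‖ := one_mul _
      have cs2 : |⟪x, n⟫_ℝ| ≤ ‖x‖ := by
        calc |⟪x, n⟫_ℝ| ≤ ‖x‖ * ‖n‖ := abs_real_inner_le_norm x n
          _ ≤ ‖x‖ * 1 := by gcongr
          _ = ‖x‖ := mul_one _
      have cs3 : |⟪x, u⟫_ℝ| ≤ ‖x‖ * ‖u‖ := abs_real_inner_le_norm x u
      have hrp2 : (0:ℝ) ≤ ‖x‖ ^ (p - 2) := Real.rpow_nonneg (norm_nonneg x) _
      have hrp4 : (0:ℝ) ≤ ‖x‖ ^ (p - 4) := Real.rpow_nonneg (norm_nonneg x) _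
      have step : ‖‖x‖ ^ (p - 2) * ⟪n, u⟫_ℝ +
          ⟪x, n⟫_ℝ * ((((p-2)/2) * ‖x‖ ^ (p - 4)) * (2 * ⟪x, u⟫_ℝ))‖ ≤
          ‖x‖ ^ (p - 2) * ‖u‖ + |p - 2| * (‖x‖ ^ (p - 4) * (‖x‖ * (‖x‖ * ‖u‖))) := by
        rw [Real.norm_eq_abs]
        calc |‖x‖ ^ (p - 2) * ⟪n, u⟫_ℝ +
            ⟪x, n⟫_ℝ * ((((p-2)/2) * ‖x‖ ^ (p - 4)) * (2 * ⟪x, u⟫_ℝ))|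
            ≤ |‖x‖ ^ (p - 2) * ⟪n, u⟫_ℝ| +
              |⟪x, n⟫_ℝ * ((((p-2)/2) * ‖x‖ ^ (p - 4)) * (2 * ⟪x, u⟫_ℝ))| := abs_add_le _ _
          _ = ‖x‖ ^ (p - 2) * |⟪n, u⟫_ℝ| +
              |⟪x, n⟫_ℝ| * (|p - 2| * ‖x‖ ^ (p - 4) * |⟪x, u⟫_ℝ|) := by
              rw [abs_mul, abs_of_nonneg hrp2, abs_mul, abs_mul, abs_mul, abs_mul,
                abs_of_nonneg hrp4]
              rw [show |(p-2)/2| = |p-2|/2 by rw [abs_div]; norm_num,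
                show |(2:ℝ)| = 2 by norm_num]
              ring
          _ ≤ ‖x‖ ^ (p - 2) * ‖u‖ + ‖x‖ * (|p - 2| * ‖x‖ ^ (p - 4) * (‖x‖ * ‖u‖)) := by
              gcongr <;> positivity
          _ = ‖x‖ ^ (p - 2) * ‖u‖ + |p - 2| * (‖x‖ ^ (p - 4) * (‖x‖ * (‖x‖ * ‖u‖))) := by ring
      refine step.trans ?_
      have hxx : ‖x‖ ^ (p - 4) * (‖x‖ * ‖x‖) = ‖x‖ ^ (p - 2) := by
        have : ‖x‖ * ‖x‖ = ‖x‖ ^ ((2:ℕ):ℝ) := by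
          rw [Real.rpow_natCast]; ring
        rw [this, ← Real.rpow_add hx0]
        ring_nf
      have collect : ‖x‖ ^ (p - 2) * ‖u‖ + |p - 2| * (‖x‖ ^ (p - 4) * (‖x‖ * (‖x‖ * ‖u‖)))
          = (1 + |p - 2|) * ‖x‖ ^ (p - 2) * ‖u‖ := by
        rw [show ‖x‖ ^ (p - 4) * (‖x‖ * (‖x‖ * ‖u‖)) = (‖x‖ ^ (p-4) * (‖x‖ * ‖x‖)) * ‖u‖ by ring,
          hxx]
        ring
      rw [collect]
      gcongr
      rw [hC₀]
      split_ifs with h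
      · have habs : |p - 2| = p - 2 := abs_of_nonneg (by linarith)
        rw [habs]
        have : ‖x‖ ^ (p-2) ≤ M ^ (p-2) := Real.rpow_le_rpow (norm_nonneg x) hxM (by linarith)
        calc (1 + (p - 2)) * ‖x‖ ^ (p - 2) ≤ (1 + (p-2)) * M ^ (p-2) := by
              gcongr
          _ = M ^ (p-2) * (p - 1) := by ring
      · push_neg at h
        have habs : |p - 2| = 2 - p := by rw [abs_of_nonpos (by linarith)]; ring
        rw [habs]
        have : ‖x‖ ^ (p-2) ≤ m ^ (p-2) := Real.rpow_le_rpow_of_nonpos hm hxm (by linarith)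
        calc (1 + (2 - p)) * ‖x‖ ^ (p - 2) ≤ (1 + (2-p)) * m ^ (p-2) := by
              gcongr
          _ = m ^ (p-2) * (3 - p) := by ring
  have := key.trans (by
    calc C₀ * ‖v - w‖ ≤ C₀ * δ := by gcongr
      _ = C₀ * δ := rfl)
  rw [Real.norm_eq_abs] at this
  refine this.trans (le_of_eq ?_)
  rw [hC₀]; split_ifs <;> ring

private noncomputable def insMap (n : ℕ) (i : Fin (n+1)) (c : ℝ) :
    (Fin n → ℝ) → EuclideanSpace ℝ (Fin (n+1)) :=
  fun y => (WithLp.equiv 2 (Fin (n+1) → ℝ)).symm (i.insertNth c y)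

private lemma insMap_apply (n : ℕ) (i : Fin (n+1)) (c : ℝ) (y : Fin n → ℝ) (j : Fin (n+1)) :
    insMap n i c y j = Fin.insertNth (α := fun _ => ℝ) i c y j := rfl

private lemma lipschitz_insMap (n : ℕ) (i : Fin (n+1)) (c : ℝ) :
    LipschitzWith ((n : ℝ≥0) + 1) (insMap n i c) := by
  apply LipschitzWith.of_dist_le_mul
  intro y y'
  rw [dist_eq_norm]
  set d := dist y y' with hdd
  have hd : 0 ≤ d := dist_nonneg
  set z := insMap n i c y - insMap n i c y' with hz
  have hzco : ∀ j, z j = Fin.insertNth (α := fun _ => ℝ) i c y j - Fin.insertNth (α := fun _ => ℝ) i c y' j := fun j => rfl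
  have hnorm : ‖z‖ = Real.sqrt (∑ j, ‖z j‖ ^ 2) := EuclideanSpace.norm_eq z
  have hsum : (∑ j, ‖z j‖ ^ 2) = ‖z i‖ ^ 2 + ∑ k : Fin n, ‖z (i.succAbove k)‖ ^ 2 :=
    Fin.sum_univ_succAbove (fun j => ‖z j‖ ^ 2) i
  have hzi : z i = 0 := by rw [hzco, Fin.insertNth_apply_same, Fin.insertNth_apply_same, sub_self]
  have hzk : ∀ k : Fin n, ‖z (i.succAbove k)‖ ^ 2 ≤ d ^ 2 := by
    intro k
    have h1 : ‖z (i.succAbove k)‖ ≤ d := by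
      rw [hzco, Fin.insertNth_apply_succAbove, Fin.insertNth_apply_succAbove, ← dist_eq_norm]
      exact dist_le_pi_dist y y' k
    exact pow_le_pow_left₀ (norm_nonneg _) h1 2
  have hb : (∑ j, ‖z j‖ ^ 2) ≤ (((n:ℝ) + 1) * d) ^ 2 := by
    rw [hsum, hzi]
    have h2 : (∑ k : Fin n, ‖z (i.succAbove k)‖ ^ 2) ≤ (n : ℝ) * d ^ 2 := by
      calc (∑ k : Fin n, ‖z (i.succAbove k)‖ ^ 2) ≤ ∑ _k : Fin n, d ^ 2 :=
            Finset.sum_le_sum fun k _ => hzk k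
        _ = (n : ℝ) * d ^ 2 := by rw [Finset.sum_const, Finset.card_univ, Fintype.card_fin,
            nsmul_eq_mul]
    have h0 : ‖(0 : ℝ)‖ ^ 2 = 0 := by simp
    rw [h0]
    nlinarith [sq_nonneg d, Nat.cast_nonneg (α := ℝ) n]
  calc ‖z‖ = Real.sqrt (∑ j, ‖z j‖ ^ 2) := hnorm
    _ ≤ Real.sqrt ((((n:ℝ) + 1) * d) ^ 2) := Real.sqrt_le_sqrt hb
    _ = ((n:ℝ) + 1) * d := Real.sqrt_sq (by positivity)
    _ = ((n : ℝ≥0) + 1 : ℝ≥0) * d := by push_cast; ring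

private lemma coord_le_norm {n : ℕ} (v : EuclideanSpace ℝ (Fin n)) (i : Fin n) :
    |v i| ≤ ‖v‖ := by
  rw [EuclideanSpace.norm_eq]
  have h1 : |v i| = Real.sqrt (‖v i‖ ^ 2) := by
    rw [Real.norm_eq_abs, Real.sqrt_sq_eq_abs, abs_abs]
  rw [h1]
  apply Real.sqrt_le_sqrt
  exact Finset.single_le_sum (f := fun j => ‖v j‖ ^ 2) (fun j _ => by positivity)
    (Finset.mem_univ i)

private lemma lipschitzOnWith_normalize' {F : Type*} [NormedAddCommGroup F] [NormedSpace ℝ F] :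
    LipschitzOnWith 2 (fun x : F => ‖x‖⁻¹ • x) {x : F | 1 ≤ ‖x‖} := by
  apply LipschitzOnWith.of_dist_le_mul
  intro x hx y hy
  simp only [Set.mem_setOf_eq] at hx hy
  have hx0 : (0:ℝ) < ‖x‖ := lt_of_lt_of_le one_pos hx
  have hy0 : (0:ℝ) < ‖y‖ := lt_of_lt_of_le one_pos hy
  rw [dist_eq_norm, dist_eq_norm]
  have hid : ‖x‖⁻¹ • x - ‖y‖⁻¹ • y = ‖x‖⁻¹ • (x - y) + (‖x‖⁻¹ - ‖y‖⁻¹) • y := by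
    rw [smul_sub, sub_smul]; abel
  rw [hid]
  have hxinv : ‖x‖⁻¹ ≤ 1 := by
    rw [inv_le_one_iff₀]; right; exact hx
  have h1 : ‖‖x‖⁻¹ • (x - y)‖ ≤ ‖x - y‖ := by
    rw [norm_smul, Real.norm_eq_abs, abs_of_nonneg (inv_nonneg.2 hx0.le)]
    calc ‖x‖⁻¹ * ‖x - y‖ ≤ 1 * ‖x - y‖ := by gcongr
      _ = ‖x - y‖ := one_mul _
  have h2 : ‖(‖x‖⁻¹ - ‖y‖⁻¹) • y‖ ≤ ‖x - y‖ := by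
    rw [norm_smul, Real.norm_eq_abs]
    have hval : (‖x‖⁻¹ - ‖y‖⁻¹) * ‖y‖ = (‖y‖ - ‖x‖) * ‖x‖⁻¹ := by
      field_simp
    rw [show |‖x‖⁻¹ - ‖y‖⁻¹| * ‖y‖ = |(‖x‖⁻¹ - ‖y‖⁻¹) * ‖y‖| by
        rw [abs_mul, abs_of_nonneg (norm_nonneg y)], hval, abs_mul,
      abs_of_nonneg (inv_nonneg.2 hx0.le)]
    calc |‖y‖ - ‖x‖| * ‖x‖⁻¹ ≤ ‖x - y‖ * 1 := by
          apply mul_le_mul ?_ hxinv (inv_nonneg.2 hx0.le) (norm_nonneg _)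
          rw [abs_sub_comm]
          exact (abs_norm_sub_norm_le x y).trans (le_of_eq rfl)
      _ = ‖x - y‖ := mul_one _
  calc ‖‖x‖⁻¹ • (x - y) + (‖x‖⁻¹ - ‖y‖⁻¹) • y‖
      ≤ ‖‖x‖⁻¹ • (x - y)‖ + ‖(‖x‖⁻¹ - ‖y‖⁻¹) • y‖ := norm_add_le _ _
    _ ≤ ‖x - y‖ + ‖x - y‖ := add_le_add h1 h2
    _ = (2 : ℝ≥0) * ‖x - y‖ := by push_cast; ring


private lemma sphere_hausdorff_lt_top (n : ℕ) (x₀ : EuclideanSpace ℝ (Fin (n+1))) (R : ℝ)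
    (hR : 0 < R) : μH[(n:ℝ)] (sphere x₀ R) < ⊤ := by
  classical
  set sgn : Bool → ℝ := fun b => if b then 1 else -1 with hsgn
  have hsgnabs : ∀ b, |sgn b| = 1 := by intro b; rw [hsgn]; cases b <;> simp
  set nrm : EuclideanSpace ℝ (Fin (n+1)) → EuclideanSpace ℝ (Fin (n+1)) :=
    fun x => ‖x‖⁻¹ • x with hnrm
  set F : Fin (n+1) × Bool → (Fin n → ℝ) → EuclideanSpace ℝ (Fin (n+1)) :=
    fun q y => x₀ + R • nrm (insMap n q.1 (sgn q.2) y) with hF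
  -- step 1 : the cover
  have cover : sphere x₀ R ⊆ ⋃ q : Fin (n+1) × Bool, F q '' closedBall 0 1 := by
    intro z hz
    rw [mem_sphere_iff_norm] at hz
    set u : EuclideanSpace ℝ (Fin (n+1)) := R⁻¹ • (z - x₀) with hu
    have hunorm : ‖u‖ = 1 := by
      rw [hu, norm_smul, Real.norm_eq_abs, abs_of_nonneg (inv_nonneg.2 hR.le), hz,
        inv_mul_cancel₀ hR.ne']
    obtain ⟨i, -, hi⟩ := Finset.exists_max_image Finset.univ (fun j => |u j|)
      ⟨⟨0, Nat.succ_pos n⟩, Finset.mem_univ _⟩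
    have hi' : ∀ j, |u j| ≤ |u i| := fun j => hi j (Finset.mem_univ j)
    have hui : u i ≠ 0 := by
      intro h0
      have hu0 : u = 0 := by
        ext j
        have := hi' j
        rw [h0, abs_zero] at this
        exact abs_eq_zero.1 (le_antisymm this (abs_nonneg _))
      rw [hu0, norm_zero] at hunorm
      exact one_ne_zero hunorm.symm
    have habs : (0:ℝ) < |u i| := abs_pos.2 hui
    set t : ℝ := |u i|⁻¹ with ht
    have htpos : 0 < t := inv_pos.2 habs
    set y : Fin n → ℝ := fun k => t * u (i.succAbove k) with hy
    have hyb : y ∈ closedBall (0 : Fin n → ℝ) 1 := by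
      rw [mem_closedBall, dist_zero_right]
      refine (pi_norm_le_iff_of_nonneg zero_le_one).2 fun k => ?_
      rw [hy, Real.norm_eq_abs, abs_mul, abs_of_pos htpos, ht]
      calc |u i|⁻¹ * |u (i.succAbove k)| ≤ |u i|⁻¹ * |u i| :=
            mul_le_mul_of_nonneg_left (hi' _) (inv_nonneg.2 habs.le)
        _ = 1 := inv_mul_cancel₀ habs.ne'
    set b : Bool := decide (0 < u i) with hb
    refine Set.mem_iUnion.2 ⟨(i, b), ⟨y, hyb, ?_⟩⟩
    have hins : insMap n i (sgn b) y = t • u := by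
      ext j
      rw [insMap_apply]
      refine Fin.succAboveCases i ?_ ?_ j
      · rw [Fin.insertNth_apply_same]
        show sgn b = (t • u) i
        have hti : (t • u) i = t * u i := rfl
        rw [hti, ht]
        by_cases hpos : 0 < u i
        · have hs1 : sgn b = 1 := by simp [hsgn, hb, hpos]
          rw [hs1, abs_of_pos hpos]
          exact (inv_mul_cancel₀ hui).symm
        · have hneg : u i < 0 := lt_of_le_of_ne (not_lt.1 hpos) hui
          have hs1 : sgn b = -1 := by simp [hsgn, hb, hpos]
          rw [hs1, abs_of_neg hneg]
          field_simp
      · intro k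
        rw [Fin.insertNth_apply_succAbove]
        show y k = (t • u) (i.succAbove k)
        rfl
    rw [hF]
    dsimp only
    rw [hins, hnrm]
    dsimp only
    have htn : ‖t • u‖ = t := by
      rw [norm_smul, hunorm, mul_one, Real.norm_eq_abs, abs_of_pos htpos]
    have hcollapse : t⁻¹ • t • u = u := by
      rw [smul_smul, inv_mul_cancel₀ htpos.ne', one_smul]
    rw [htn, hcollapse, hu, smul_smul, mul_inv_cancel₀ hR.ne', one_smul]
    abel
  -- step 2 : each piece has finite measure
  refine lt_of_le_of_lt ((measure_mono cover).trans (measure_iUnion_le _)) ?_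
  rw [tsum_fintype]
  refine ENNReal.sum_lt_top.2 fun q _ => ?_
  set K : ℝ≥0 := Real.toNNReal R * (2 * ((n : ℝ≥0) + 1)) with hK
  have hmaps : Set.MapsTo (insMap n q.1 (sgn q.2)) (closedBall 0 1)
      {x : EuclideanSpace ℝ (Fin (n+1)) | 1 ≤ ‖x‖} := by
    intro y _
    simp only [Set.mem_setOf_eq]
    calc (1:ℝ) = |insMap n q.1 (sgn q.2) y q.1| := by
          rw [insMap_apply, Fin.insertNth_apply_same, hsgnabs]
      _ ≤ ‖insMap n q.1 (sgn q.2) y‖ := coord_le_norm _ _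
  have l2 : LipschitzOnWith (2 * ((n : ℝ≥0) + 1)) (nrm ∘ insMap n q.1 (sgn q.2))
      (closedBall 0 1) :=
    lipschitzOnWith_normalize'.comp ((lipschitz_insMap n q.1 (sgn q.2)).lipschitzOnWith) hmaps
  have aff : LipschitzWith (Real.toNNReal R)
      (fun w : EuclideanSpace ℝ (Fin (n+1)) => x₀ + R • w) := by
    apply LipschitzWith.of_dist_le_mul
    intro a c
    rw [dist_eq_norm, dist_eq_norm]
    have hide : x₀ + R • a - (x₀ + R • c) = R • (a - c) := by rw [smul_sub]; abel
    rw [hide, norm_smul, Real.norm_eq_abs, abs_of_pos hR, Real.coe_toNNReal _ hR.le]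
  have hlip : LipschitzOnWith K (F q) (closedBall 0 1) := by
    have := aff.comp_lipschitzOnWith l2
    exact this
  have himg := hlip.hausdorffMeasure_image_le (d := (n:ℝ)) (Nat.cast_nonneg n)
  refine lt_of_le_of_lt himg ?_
  have hμcb : (μH[(n:ℝ)] : Measure (Fin n → ℝ)) = volume := by
    have h := MeasureTheory.hausdorffMeasure_pi_real (ι := Fin n)
    simpa using h
  rw [hμcb]
  exact ENNReal.mul_lt_top
    (ENNReal.rpow_lt_top_of_nonneg (Nat.cast_nonneg n) ENNReal.coe_ne_top)
    ((isCompact_closedBall _ _).measure_lt_top)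

/-- error bound for the boundary-formulation average p-Laplace. -/
theorem avgPLaplace_error_bound (d : ℕ) (hd : 1 ≤ d) (p : ℝ) (hp : 1 ≤ p)
    (R : ℝ) (hR : 0 < R) (x₀ : EuclideanSpace ℝ (Fin d))
    (s sHat : EuclideanSpace ℝ (Fin d) → EuclideanSpace ℝ (Fin d))
    (hs : Continuous s) (hsHat : Continuous sHat)
    (δ m M : ℝ) (hδ : 0 < δ) (hm : 0 < m) (hmM : m ≤ M)
    (ha : ∀ y ∈ sphere x₀ R, ‖s y - sHat y‖ < δ)
    (hb : ∀ y ∈ sphere x₀ R,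
      (m < ‖s y‖ ∧ ‖s y‖ ≤ M) ∧ (m < ‖sHat y‖ ∧ ‖sHat y‖ ≤ M))
    (hc : ∀ y ∈ sphere x₀ R, ∀ t ∈ Set.Icc (0 : ℝ) 1, m ≤ ‖t • s y + (1 - t) • sHat y‖) :
    |avgPLaplace d p s x₀ R - avgPLaplace d p sHat x₀ R| ≤
      ((μH[(d : ℝ) - 1] (sphere x₀ R)).toReal / (volume (ball x₀ R)).toReal) *
        (if 2 ≤ p then δ * M ^ (p - 2) * (p - 1) else δ * m ^ (p - 2) * (3 - p)) := by
  obtain ⟨n, rfl⟩ : ∃ n, d = n + 1 := ⟨d - 1, (Nat.succ_pred_eq_of_pos hd).symm⟩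
  have hexp : ((n + 1 : ℕ) : ℝ) - 1 = (n : ℝ) := by push_cast; ring
  set Cp : ℝ := if 2 ≤ p then δ * M ^ (p - 2) * (p - 1) else δ * m ^ (p - 2) * (3 - p) with hCp
  set g : EuclideanSpace ℝ (Fin (n+1)) → ℝ :=
    fun y => ‖s y‖ ^ (p - 2) * ⟪s y, R⁻¹ • (y - x₀)⟫_ℝ with hg
  set gh : EuclideanSpace ℝ (Fin (n+1)) → ℝ :=
    fun y => ‖sHat y‖ ^ (p - 2) * ⟪sHat y, R⁻¹ • (y - x₀)⟫_ℝ with hgh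
  have hν : μH[(n:ℝ)] (sphere x₀ R) < ⊤ := sphere_hausdorff_lt_top n x₀ R hR
  have hmeas : MeasurableSet (sphere x₀ R) := isClosed_sphere.measurableSet
  -- unit normal norm
  have hnrm1 : ∀ y ∈ sphere x₀ R, ‖R⁻¹ • (y - x₀)‖ = 1 := by
    intro y hy
    rw [mem_sphere_iff_norm] at hy
    rw [norm_smul, Real.norm_eq_abs, abs_of_nonneg (inv_nonneg.2 hR.le), hy,
      inv_mul_cancel₀ hR.ne']
  -- integrability of each piece
  have hbound : ∀ (f : EuclideanSpace ℝ (Fin (n+1)) → ℝ)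
      (v : EuclideanSpace ℝ (Fin (n+1)) → EuclideanSpace ℝ (Fin (n+1))),
      Continuous v → (∀ y ∈ sphere x₀ R, m < ‖v y‖ ∧ ‖v y‖ ≤ M) →
      (f = fun y => ‖v y‖ ^ (p - 2) * ⟪v y, R⁻¹ • (y - x₀)⟫_ℝ) →
      IntegrableOn f (sphere x₀ R) μH[(n:ℝ)] := by
    intro f v hv hvb hf
    constructor
    · apply ContinuousOn.aestronglyMeasurable _ hmeas
      intro y hy
      have hne : ‖v y‖ ≠ 0 := (lt_trans hm (hvb y hy).1).ne'
      have c1 : ContinuousAt (fun r : ℝ => r ^ (p - 2)) ‖v y‖ :=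
        Real.continuousAt_rpow_const _ _ (Or.inl hne)
      have c2 : Continuous fun y : EuclideanSpace ℝ (Fin (n+1)) =>
          ⟪v y, R⁻¹ • (y - x₀)⟫_ℝ :=
        hv.inner (((continuous_id.sub continuous_const).const_smul R⁻¹))
      have c3 : ContinuousAt (fun x : EuclideanSpace ℝ (Fin (n+1)) => ‖v x‖) y :=
        hv.norm.continuousAt
      have c4 : ContinuousAt (fun x : EuclideanSpace ℝ (Fin (n+1)) => ‖v x‖ ^ (p - 2)) y :=
        ContinuousAt.comp (g := fun r : ℝ => r ^ (p - 2))
          (f := fun x : EuclideanSpace ℝ (Fin (n+1)) => ‖v x‖) c1 c3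
      rw [hf]
      exact (c4.mul c2.continuousAt).continuousWithinAt
    · apply HasFiniteIntegral.restrict_of_bounded (C := (M ^ (p-2) + m ^ (p-2)) * M) hν
      refine (ae_restrict_iff' hmeas).2 (ae_of_all _ fun y hy => ?_)
      obtain ⟨hvm, hvM⟩ := hvb y hy
      have h1 : ‖v y‖ ^ (p - 2) ≤ M ^ (p-2) + m ^ (p-2) := by
        by_cases h2p : 2 ≤ p
        · have := Real.rpow_le_rpow (norm_nonneg (v y)) hvM (by linarith : (0:ℝ) ≤ p - 2)
          have hmn : (0:ℝ) ≤ m ^ (p-2) := Real.rpow_nonneg hm.le _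
          linarith
        · push_neg at h2p
          have hz : p - 2 ≤ 0 := by linarith
          have := Real.rpow_le_rpow_of_nonpos hm hvm.le hz
          have hMn : (0:ℝ) ≤ M ^ (p-2) := Real.rpow_nonneg (hm.trans_le hmM).le _
          linarith
      have h2 : |⟪v y, R⁻¹ • (y - x₀)⟫_ℝ| ≤ M := by
        calc |⟪v y, R⁻¹ • (y - x₀)⟫_ℝ| ≤ ‖v y‖ * ‖R⁻¹ • (y - x₀)‖ :=
              abs_real_inner_le_norm _ _
          _ = ‖v y‖ := by rw [hnrm1 y hy, mul_one]
          _ ≤ M := hvM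
      rw [hf, Real.norm_eq_abs, abs_mul,
        abs_of_nonneg (Real.rpow_nonneg (norm_nonneg (v y)) _)]
      have hp2 : (0:ℝ) ≤ ‖v y‖ ^ (p-2) := Real.rpow_nonneg (norm_nonneg (v y)) _
      have habs : (0:ℝ) ≤ |⟪v y, R⁻¹ • (y - x₀)⟫_ℝ| := abs_nonneg _
      nlinarith
  have hint1 : IntegrableOn g (sphere x₀ R) μH[(n:ℝ)] :=
    hbound g s hs (fun y hy => (hb y hy).1) rfl
  have hint2 : IntegrableOn gh (sphere x₀ R) μH[(n:ℝ)] :=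
    hbound gh sHat hsHat (fun y hy => (hb y hy).2) rfl
  -- pointwise bound
  have hptw : ∀ y ∈ sphere x₀ R, ‖g y - gh y‖ ≤ Cp := by
    intro y hy
    rw [hg, hgh, Real.norm_eq_abs]
    exact pointwise_bound p hp (R⁻¹ • (y - x₀)) (s y) (sHat y) (le_of_eq (hnrm1 y hy))
      m M δ hm hδ.le (hb y hy).1.2 (hb y hy).2.2 (hc y hy) (ha y hy).le
  -- assemble
  simp only [avgPLaplace]
  rw [hexp]
  rw [← mul_sub, abs_mul, abs_of_nonneg (inv_nonneg.2 ENNReal.toReal_nonneg)]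
  rw [← integral_sub hint1 hint2]
  have hineq : |∫ y in sphere x₀ R, (g y - gh y) ∂μH[(n:ℝ)]| ≤
      Cp * (μH[(n:ℝ)] (sphere x₀ R)).toReal := by
    rw [← Real.norm_eq_abs]
    exact norm_setIntegral_le_of_norm_le_const hν hptw
  calc (volume (ball x₀ R)).toReal⁻¹ * |∫ y in sphere x₀ R, (g y - gh y) ∂μH[(n:ℝ)]|
      ≤ (volume (ball x₀ R)).toReal⁻¹ * (Cp * (μH[(n:ℝ)] (sphere x₀ R)).toReal) :=
        mul_le_mul_of_nonneg_left hineq (inv_nonneg.2 ENNReal.toReal_nonneg)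
    _ = ((μH[(n:ℝ)] (sphere x₀ R)).toReal / (volume (ball x₀ R)).toReal) * Cp := by
        ring
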